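/- For every integer t ≥ 0 there exists a binary LCD [15t+6, 4, 8t+2] code, i.e., a 4-dimensional linear complementary dual subspace of F_2^(15t+6) with minimum weight 8t+2. -/

import Mathlib

/-- The (Hamming) weight of a vector over `F_2`. -/
def wt {n : ℕ} (x : Fin n → ZMod 2) : ℕ :=
  Finset.card (Finset.univ.filter fun i => x i ≠ 0)

/-- The dual code of a binary code `C`, with respect to the standard inner product. -/
def dualCode {n : ℕ} (C : Submodule (ZMod 2) (Fin n → ZMod 2)) :
    Submodule (ZMod 2) (Fin n → ZMod 2) where
  carrier := {x | ∀ y ∈ C, ∑ i, x i * y i = 0}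
  add_mem' := by
    intro a b ha hb y hy
    simp [Pi.add_apply, add_mul, Finset.sum_add_distrib, ha y hy, hb y hy]
  zero_mem' := by
    intro y hy
    simp
  smul_mem' := by
    intro c a ha y hy
    simp only [Pi.smul_apply, smul_eq_mul, mul_assoc, ← Finset.mul_sum, ha y hy, mul_zero]

/-- A binary code is linear complementary dual (LCD) if it meets its dual trivially. -/
def IsLCD {n : ℕ} (C : Submodule (ZMod 2) (Fin n → ZMod 2)) : Prop :=
  C ⊓ dualCode C = ⊥

/-- The minimum weight of a binary code: the smallest weight of a nonzero codeword. -/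
noncomputable def minWt {n : ℕ} (C : Submodule (ZMod 2) (Fin n → ZMod 2)) : ℕ :=
  sInf {w | ∃ x ∈ C, x ≠ 0 ∧ wt x = w}

/-- `dLCD n k` is the largest minimum weight among all binary LCD `[n,k]` codes. -/
noncomputable def dLCD (n k : ℕ) : ℕ :=
  sSup {d | ∃ C : Submodule (ZMod 2) (Fin n → ZMod 2),
    Module.finrank (ZMod 2) C = k ∧ IsLCD C ∧ minWt C = d}

namespace LCD15t6

/-- Columns of the `[15,4]` simplex code generator: all nonzero vectors of `F_2^4`,
encoded by the binary digits of `j+1`. -/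
def scol (j : Fin 15) (i : Fin 4) : ZMod 2 := (((j.val + 1) / 2 ^ i.val) % 2 : ℕ)

/-- Columns of a `[6,4,2]` generator matrix whose Gram matrix is invertible. -/
def g6 : Fin 6 → Fin 4 → ZMod 2 :=
  ![![1,0,0,0], ![0,1,0,0], ![0,0,1,0], ![0,0,0,1], ![1,1,0,1], ![0,0,1,1]]

def sEnc (m : Fin 4 → ZMod 2) (j : Fin 15) : ZMod 2 := ∑ i, m i * scol j i
def gEnc (m : Fin 4 → ZMod 2) (j : Fin 6) : ZMod 2 := ∑ i, m i * g6 j i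

lemma simplex_wt : ∀ m : Fin 4 → ZMod 2, m ≠ 0 →
    (∑ j : Fin 15, if sEnc m j ≠ 0 then 1 else 0) = 8 := by decide

lemma g6_wt_ge : ∀ m : Fin 4 → ZMod 2, m ≠ 0 →
    2 ≤ (∑ j : Fin 6, if gEnc m j ≠ 0 then 1 else 0) := by decide

lemma g6_wt_e0 :
    (∑ j : Fin 6, if gEnc (fun i => if i = 0 then 1 else 0) j ≠ 0 then 1 else 0) = 2 := by decide

lemma simplex_ip : ∀ m m' : Fin 4 → ZMod 2, ∑ j : Fin 15, sEnc m j * sEnc m' j = 0 := by decide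

lemma g6_inj : ∀ m : Fin 4 → ZMod 2, (∀ j, gEnc m j = 0) → m = 0 := by decide

lemma g6_lcd : ∀ m : Fin 4 → ZMod 2,
    (∀ m' : Fin 4 → ZMod 2, ∑ j : Fin 6, gEnc m j * gEnc m' j = 0) → m = 0 := by decide

/-- Encoding on the structured index type. -/
def encA (t : ℕ) (m : Fin 4 → ZMod 2) : (Fin t × Fin 15) ⊕ Fin 6 → ZMod 2
  | .inl p => sEnc m p.2
  | .inr j => gEnc m j

lemma encA_add (t : ℕ) (m m' : Fin 4 → ZMod 2) (a : (Fin t × Fin 15) ⊕ Fin 6) :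
    encA t (m + m') a = encA t m a + encA t m' a := by
  cases a <;> simp [encA, sEnc, gEnc, add_mul, Finset.sum_add_distrib]

lemma encA_smul (t : ℕ) (c : ZMod 2) (m : Fin 4 → ZMod 2) (a : (Fin t × Fin 15) ⊕ Fin 6) :
    encA t (c • m) a = c * encA t m a := by
  cases a <;> simp [encA, sEnc, gEnc, Finset.mul_sum, mul_assoc]

/-- Index reshuffle. -/
def eqv (t : ℕ) : ((Fin t × Fin 15) ⊕ Fin 6) ≃ Fin (15 * t + 6) :=
  ((Equiv.sumCongr finProdFinEquiv (Equiv.refl (Fin 6))).trans finSumFinEquiv).trans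
    (finCongr (by ring))

/-- The generator map of the code. -/
def φ (t : ℕ) : (Fin 4 → ZMod 2) →ₗ[ZMod 2] (Fin (15 * t + 6) → ZMod 2) where
  toFun m := fun i => encA t m ((eqv t).symm i)
  map_add' m m' := funext fun i => encA_add t m m' _
  map_smul' c m := funext fun i => encA_smul t c m _

lemma phi_inj (t : ℕ) : Function.Injective (φ t) := by
  intro m m' h
  have h' : ∀ j : Fin 6, gEnc m j = gEnc m' j := by
    intro j
    have := congrFun h ((eqv t) (Sum.inr j))
    simpa [φ, Equiv.symm_apply_apply, encA] using this
  have : ∀ j : Fin 6, gEnc (m - m') j = 0 := by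
    intro j
    simp [gEnc, sub_mul, Finset.sum_sub_distrib]
    have := h' j
    simp [gEnc] at this
    simpa [this]
  have := g6_inj (m - m') this
  exact sub_eq_zero.mp this

lemma wt_phi (t : ℕ) (m : Fin 4 → ZMod 2) :
    wt (φ t m) = (∑ j : Fin 15, if sEnc m j ≠ 0 then 1 else 0) * t
      + ∑ j : Fin 6, if gEnc m j ≠ 0 then 1 else 0 := by
  have h1 : wt (φ t m) = ∑ i : Fin (15 * t + 6),
      if encA t m ((eqv t).symm i) ≠ 0 then 1 else 0 := by
    unfold wt; rw [Finset.card_filter]; rfl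
  rw [h1, Equiv.sum_comp (eqv t).symm (fun a => if encA t m a ≠ 0 then 1 else 0)]
  rw [Fintype.sum_sum_type]
  congr 1
  rw [Fintype.sum_prod_type]
  have : (∑ x : Fin t, ∑ j : Fin 15, if encA t m (Sum.inl (x, j)) ≠ 0 then 1 else 0)
      = ∑ _x : Fin t, ∑ j : Fin 15, if sEnc m j ≠ 0 then 1 else 0 := rfl
  rw [this]
  simp [Finset.sum_const, mul_comm]

lemma ip_phi (t : ℕ) (m m' : Fin 4 → ZMod 2) :
    ∑ i, φ t m i * φ t m' i = ∑ j : Fin 6, gEnc m j * gEnc m' j := by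
  have h1 : ∑ i, φ t m i * φ t m' i = ∑ i : Fin (15 * t + 6),
      encA t m ((eqv t).symm i) * encA t m' ((eqv t).symm i) := rfl
  rw [h1, Equiv.sum_comp (eqv t).symm (fun a => encA t m a * encA t m' a)]
  rw [Fintype.sum_sum_type]
  have h2 : ∑ p : Fin t × Fin 15, encA t m (Sum.inl p) * encA t m' (Sum.inl p) = 0 := by
    rw [Fintype.sum_prod_type]
    simp only [encA]
    simp [simplex_ip m m']
  rw [h2, zero_add]
  rfl

end LCD15t6


theorem exists_lcd_15t6 (t : ℕ) :
    ∃ C : Submodule (ZMod 2) (Fin (15 * t + 6) → ZMod 2),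
      Module.finrank (ZMod 2) C = 4 ∧ IsLCD C ∧ minWt C = 8 * t + 2 := by
  classical
  refine ⟨LinearMap.range (LCD15t6.φ t), ?_, ?_, ?_⟩
  · rw [LinearMap.finrank_range_of_inj (LCD15t6.phi_inj t)]
    simp [Module.finrank_pi]
  · rw [IsLCD, eq_bot_iff]
    rintro x ⟨hxC, hxD⟩
    obtain ⟨m, rfl⟩ := hxC
    have hm : m = 0 := by
      apply LCD15t6.g6_lcd
      intro m'
      have := hxD (LCD15t6.φ t m') ⟨m', rfl⟩
      rwa [LCD15t6.ip_phi] at this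
    simp [hm]
  · set e0 : Fin 4 → ZMod 2 := fun i => if i = 0 then 1 else 0 with he0
    have he0ne : e0 ≠ 0 := by
      intro h
      have := congrFun h 0
      simp [he0] at this
    have hwt : wt (LCD15t6.φ t e0) = 8 * t + 2 := by
      rw [LCD15t6.wt_phi, LCD15t6.simplex_wt e0 he0ne, LCD15t6.g6_wt_e0]
    have hmem : 8 * t + 2 ∈ {w | ∃ x ∈ LinearMap.range (LCD15t6.φ t), x ≠ 0 ∧ wt x = w} := by
      refine ⟨LCD15t6.φ t e0, ⟨e0, rfl⟩, ?_, hwt⟩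
      intro h
      exact he0ne (LCD15t6.phi_inj t (by simpa using h))
    refine le_antisymm (Nat.sInf_le hmem) (le_csInf ⟨_, hmem⟩ ?_)
    rintro w ⟨x, hxC, hx0, rfl⟩
    obtain ⟨m, rfl⟩ := hxC
    have hm : m ≠ 0 := by
      intro h; subst h; simp at hx0
    rw [LCD15t6.wt_phi, LCD15t6.simplex_wt m hm]
    have := LCD15t6.g6_wt_ge m hm
    omega
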